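/- The set of fixed points of the twist map η inside the icosian ring 𝕀 is exactly the lattice L = ℤ-span of (1,0,0,0), ½(−1,1,1,1), (0,−1,0,0), ½(0,1,τ−1,−τ): that is, {x ∈ 𝕀 : η(x) = x} = L. -/

import Mathlib

open Polynomial Quaternion

noncomputable section

set_option maxRecDepth 8000
set_option synthInstance.maxHeartbeats 1000000
set_option maxHeartbeats 1000000

def f5 : ℚ[X] := X ^ 2 - C 5

instance f5_irred : Fact (Irreducible f5) := ⟨by
  unfold f5
  apply X_pow_sub_C_irreducible_of_prime Nat.prime_two
  intro b hb
  have h5 : Irrational (Real.sqrt 5) := (Nat.prime_five).irrational_sqrt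
  have hb' : ((b : ℝ)) ^ 2 = 5 := by exact_mod_cast congrArg (fun q : ℚ => (q : ℝ)) hb
  have heq : Real.sqrt 5 = |(b : ℝ)| := by
    rw [← hb', Real.sqrt_sq_eq_abs]
  rw [heq] at h5
  exact h5 ⟨|b|, by push_cast; ring⟩⟩

abbrev K : Type := AdjoinRoot f5

instance : Field K := inferInstance
instance : SMul K (Quaternion K) := inferInstance
instance : Algebra K (Quaternion K) := inferInstance

def sqrt5 : K := AdjoinRoot.root f5

lemma sqrt5_sq : sqrt5 ^ 2 = 5 := by
  have h : AdjoinRoot.mk f5 f5 = 0 := AdjoinRoot.mk_self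
  have e : AdjoinRoot.mk f5 f5 = sqrt5 ^ 2 - 5 := by
    show AdjoinRoot.mk f5 (X ^ 2 - C 5) = _
    rw [map_sub, map_pow, AdjoinRoot.mk_X, AdjoinRoot.mk_C]
    simp [sqrt5]
  rw [e, sub_eq_zero] at h
  exact h

def conjK : K →+* K :=
  AdjoinRoot.lift (algebraMap ℚ K) (-sqrt5) (by
    simp only [f5, eval₂_sub, eval₂_pow, eval₂_X, eval₂_C, sub_eq_zero]
    have h : (-sqrt5) ^ 2 = sqrt5 ^ 2 := by ring
    rw [h, sqrt5_sq]
    simp)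

def τ : K := (1 + sqrt5) / 2

abbrev ℍK := Quaternion K

def twist (x : ℍK) : ℍK := ⟨conjK x.re, conjK x.imI, conjK x.imK, conjK x.imJ⟩

def icoB : Fin 4 → ℍK :=
  ![1, ⟨0,1,0,0⟩, ⟨1/2,1/2,1/2,1/2⟩, ⟨(1-τ)/2, τ/2, 0, 1/2⟩]

def Ico : AddSubgroup ℍK :=
  AddSubgroup.closure (Set.range icoB ∪ Set.range fun i => τ • icoB i)

def lB : Fin 4 → ℍK :=
  ![1, ⟨-(1/2),1/2,1/2,1/2⟩, ⟨0,-1,0,0⟩, ⟨0,1/2,(τ-1)/2,-(τ/2)⟩]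

def LatA4 : AddSubgroup ℍK := AddSubgroup.closure (Set.range lB)

def LatATau : AddSubgroup ℍK :=
  AddSubgroup.closure (Set.range lB ∪ Set.range fun i => τ • lB i)



lemma conjK_sqrt5 : conjK sqrt5 = -sqrt5 := AdjoinRoot.lift_root _
lemma conjK_rat (q : ℚ) : conjK (q : K) = (q : K) := map_ratCast conjK q
lemma conjK_tau : conjK τ = 1 - τ := by
  unfold τ
  rw [map_div₀, map_add, map_one, conjK_sqrt5]
  have h2 : conjK 2 = 2 := map_ofNat conjK 2
  rw [h2]; ring
lemma sqrt5_ne_zero : sqrt5 ≠ 0 := by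
  intro h
  have := sqrt5_sq
  rw [h] at this
  norm_num at this
lemma no_rat_sqrt5 (q : ℚ) : q ^ 2 ≠ 5 := by
  intro hb
  have h5 : Irrational (Real.sqrt 5) := (Nat.prime_five).irrational_sqrt
  have hb' : ((q : ℝ)) ^ 2 = 5 := by exact_mod_cast congrArg (fun q : ℚ => (q : ℝ)) hb
  have heq : Real.sqrt 5 = |(q : ℝ)| := by rw [← hb', Real.sqrt_sq_eq_abs]
  rw [heq] at h5
  exact h5 ⟨|q|, by push_cast; ring⟩
lemma indepK (a b : ℚ) (h : (a : K) + (b : K) * sqrt5 = 0) : a = 0 ∧ b = 0 := by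
  have hinj : Function.Injective ((Rat.cast : ℚ → K)) := by
    intro p q hpq
    exact_mod_cast hpq
  by_cases hb : b = 0
  · subst hb
    simp at h
    exact ⟨hinj (by simpa using h), rfl⟩
  · exfalso
    have hs : sqrt5 = ((-a / b : ℚ) : K) := by
      field_simp
      have : (b : K) ≠ 0 := by
        simpa using fun hh => hb (hinj (by simpa using hh))
      push_cast
      field_simp
      linear_combination h
    have : ((-a/b : ℚ) : K) ^ 2 = ((5 : ℚ) : K) := by
      rw [← hs, sqrt5_sq]; norm_num
    have : (-a/b : ℚ) ^ 2 = 5 := by exact_mod_cast hinj (by push_cast at this ⊢; exact this)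
    exact no_rat_sqrt5 _ this

lemma zsre (c:ℤ)(q:ℍK) : (c•q).re = (c:K)*q.re := by
  rw [← Int.cast_smul_eq_zsmul K c q]; simp [Quaternion.re_smul, smul_eq_mul]
lemma zsi (c:ℤ)(q:ℍK) : (c•q).imI = (c:K)*q.imI := by
  rw [← Int.cast_smul_eq_zsmul K c q]; simp [Quaternion.imI_smul, smul_eq_mul]
lemma zsj (c:ℤ)(q:ℍK) : (c•q).imJ = (c:K)*q.imJ := by
  rw [← Int.cast_smul_eq_zsmul K c q]; simp [Quaternion.imJ_smul, smul_eq_mul]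
lemma zsk (c:ℤ)(q:ℍK) : (c•q).imK = (c:K)*q.imK := by
  rw [← Int.cast_smul_eq_zsmul K c q]; simp [Quaternion.imK_smul, smul_eq_mul]


@[simp] lemma icoB0_re : (icoB 0).re = 1 := rfl
@[simp] lemma icoB0_imI : (icoB 0).imI = 0 := rfl
@[simp] lemma icoB0_imJ : (icoB 0).imJ = 0 := rfl
@[simp] lemma icoB0_imK : (icoB 0).imK = 0 := rfl
@[simp] lemma icoB1_re : (icoB 1).re = 0 := rfl
@[simp] lemma icoB1_imI : (icoB 1).imI = 1 := rfl
@[simp] lemma icoB1_imJ : (icoB 1).imJ = 0 := rfl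
@[simp] lemma icoB1_imK : (icoB 1).imK = 0 := rfl
@[simp] lemma icoB2_re : (icoB 2).re = 1/2 := rfl
@[simp] lemma icoB2_imI : (icoB 2).imI = 1/2 := rfl
@[simp] lemma icoB2_imJ : (icoB 2).imJ = 1/2 := rfl
@[simp] lemma icoB2_imK : (icoB 2).imK = 1/2 := rfl
@[simp] lemma icoB3_re : (icoB 3).re = (1-τ)/2 := rfl
@[simp] lemma icoB3_imI : (icoB 3).imI = τ/2 := rfl
@[simp] lemma icoB3_imJ : (icoB 3).imJ = 0 := rfl
@[simp] lemma icoB3_imK : (icoB 3).imK = 1/2 := rfl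
@[simp] lemma lB0_re : (lB 0).re = 1 := rfl
@[simp] lemma lB0_imI : (lB 0).imI = 0 := rfl
@[simp] lemma lB0_imJ : (lB 0).imJ = 0 := rfl
@[simp] lemma lB0_imK : (lB 0).imK = 0 := rfl
@[simp] lemma lB1_re : (lB 1).re = -(1/2) := rfl
@[simp] lemma lB1_imI : (lB 1).imI = 1/2 := rfl
@[simp] lemma lB1_imJ : (lB 1).imJ = 1/2 := rfl
@[simp] lemma lB1_imK : (lB 1).imK = 1/2 := rfl
@[simp] lemma lB2_re : (lB 2).re = 0 := rfl
@[simp] lemma lB2_imI : (lB 2).imI = -1 := rfl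
@[simp] lemma lB2_imJ : (lB 2).imJ = 0 := rfl
@[simp] lemma lB2_imK : (lB 2).imK = 0 := rfl
@[simp] lemma lB3_re : (lB 3).re = 0 := rfl
@[simp] lemma lB3_imI : (lB 3).imI = 1/2 := rfl
@[simp] lemma lB3_imJ : (lB 3).imJ = (τ-1)/2 := rfl
@[simp] lemma lB3_imK : (lB 3).imK = -(τ/2) := rfl

lemma mem_Ico_rep {x : ℍK} (hx : x ∈ Ico) :
    ∃ c d : Fin 4 → ℤ, x = (∑ i, c i • icoB i) + ∑ i, d i • (τ • icoB i) := by
  induction hx using AddSubgroup.closure_induction with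
  | mem g hg =>
    rcases hg with ⟨i, rfl⟩ | ⟨i, rfl⟩
    · exact ⟨fun j => if j = i then 1 else 0, 0, by simp [Finset.sum_ite_eq']⟩
    · exact ⟨0, fun j => if j = i then 1 else 0, by simp [Finset.sum_ite_eq']⟩
  | zero => exact ⟨0, 0, by simp⟩
  | add a b _ _ ha hb =>
    obtain ⟨c1, d1, rfl⟩ := ha
    obtain ⟨c2, d2, rfl⟩ := hb
    exact ⟨c1 + c2, d1 + d2, by simp [add_smul, Finset.sum_add_distrib]; abel⟩
  | neg a _ ha =>
    obtain ⟨c1, d1, rfl⟩ := ha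
    exact ⟨-c1, -d1, by simp [neg_smul, Finset.sum_neg_distrib]; abel⟩

lemma eqQ {a b : ℚ} (h : (a : K) = (b : K)) : a = b := by exact_mod_cast h

lemma tau_sq : τ ^ 2 = τ + 1 := by
  unfold τ; linear_combination sqrt5_sq / 4

lemma twist_add (a b : ℍK) : twist (a + b) = twist a + twist b := by
  apply Quaternion.ext <;> simp [twist, map_add] <;> rfl

lemma twist_neg (a : ℍK) : twist (-a) = - twist a := by
  apply Quaternion.ext <;> simp [twist, map_neg] <;> rfl

lemma twist_zero : twist 0 = 0 := by
  apply Quaternion.ext <;> simp [twist]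

lemma mem_Ico (i : Fin 4) : icoB i ∈ Ico :=
  AddSubgroup.subset_closure (Or.inl ⟨i, rfl⟩)

lemma mem_Ico_tau (i : Fin 4) : τ • icoB i ∈ Ico :=
  AddSubgroup.subset_closure (Or.inr ⟨i, rfl⟩)

lemma lB0 : lB 0 = icoB 0 := by
  apply Quaternion.ext <;> simp

lemma lB1 : lB 1 = icoB 2 - icoB 0 := by
  apply Quaternion.ext <;> simp <;> norm_num

lemma lB2 : lB 2 = -icoB 1 := by
  apply Quaternion.ext <;> simp

lemma lB3 : lB 3 = -icoB 0 + (icoB 1 + icoB 1) - icoB 2 + icoB 3 + τ • icoB 2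
    - (τ • icoB 3 + τ • icoB 3) := by
  apply Quaternion.ext
  · simp [Quaternion.re_smul, smul_eq_mul]
    linear_combination (-1:K) * tau_sq
  · simp [Quaternion.imI_smul, smul_eq_mul]
    linear_combination (1:K) * tau_sq
  · simp [Quaternion.imJ_smul, smul_eq_mul]
    linear_combination (0:K) * tau_sq
  · simp [Quaternion.imK_smul, smul_eq_mul]
    linear_combination (0:K) * tau_sq

lemma lB_mem_Ico (i : Fin 4) : lB i ∈ Ico := by
  have h0 : lB 0 ∈ Ico := by rw [lB0]; exact mem_Ico 0
  have h1 : lB 1 ∈ Ico := by rw [lB1]; exact sub_mem (mem_Ico 2) (mem_Ico 0)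
  have h2 : lB 2 ∈ Ico := by rw [lB2]; exact neg_mem (mem_Ico 1)
  have h3 : lB 3 ∈ Ico := by
    rw [lB3]
    exact sub_mem (add_mem (add_mem (sub_mem (add_mem (neg_mem (mem_Ico 0))
      (add_mem (mem_Ico 1) (mem_Ico 1))) (mem_Ico 2)) (mem_Ico 3)) (mem_Ico_tau 2))
      (add_mem (mem_Ico_tau 3) (mem_Ico_tau 3))
  fin_cases i
  exacts [h0, h1, h2, h3]

lemma twist_lB (i : Fin 4) : twist (lB i) = lB i := by
  have hc2 : conjK 2 = 2 := map_ofNat conjK 2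
  have hhalf : conjK (1/2 : K) = 1/2 := by
    rw [map_div₀, map_one, hc2]
  have h0 : twist (lB 0) = lB 0 := by
    apply Quaternion.ext <;> simp [twist]
  have h1 : twist (lB 1) = lB 1 := by
    apply Quaternion.ext <;> simp [twist, map_neg, hhalf, hc2]
  have h2 : twist (lB 2) = lB 2 := by
    apply Quaternion.ext <;> simp [twist]
  have h3 : twist (lB 3) = lB 3 := by
    apply Quaternion.ext <;>
      simp [twist, map_div₀, map_neg, map_sub, map_one, hc2, hhalf, conjK_tau] <;> ring
  fin_cases i
  exacts [h0, h1, h2, h3]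

lemma eqK2 (a b : ℚ) (h : (a : K) + (b : K) * sqrt5 = 0) : a = 0 ∧ b = 0 := indepK a b h

/-- the fixed points of the twist map inside the icosian ring form
exactly the A₄ lattice L. -/
theorem twist_fixed_points_eq_L :
    {x : ℍK | x ∈ Ico ∧ twist x = x} = (LatA4 : Set ℍK) := by
  ext x
  simp only [Set.mem_setOf_eq, SetLike.mem_coe]
  constructor
  · rintro ⟨hx, hfix⟩
    obtain ⟨c, d, rfl⟩ := mem_Ico_rep hx
    set X := (∑ i, c i • icoB i) + ∑ i, d i • (τ • icoB i) with hX
    have hre : X.re = ((c 0 + c 2/2 + c 3/4 + d 0/2 + d 2/4 - d 3/2 : ℚ) : K)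
        + ((-c 3/4 + d 0/2 + d 2/4 : ℚ) : K) * sqrt5 := by
      simp only [hX, Fin.sum_univ_four, Quaternion.re_add, zsre]
      simp only [Quaternion.re_smul, smul_eq_mul,
        icoB0_re, icoB1_re, icoB2_re, icoB3_re]
      unfold τ; push_cast
      linear_combination (-(d 3 : K)/8) * sqrt5_sq
    have hi : X.imI = ((c 1 + c 2/2 + c 3/4 + d 1/2 + d 2/4 + 3*d 3/4 : ℚ) : K)
        + ((c 3/4 + d 1/2 + d 2/4 + d 3/4 : ℚ) : K) * sqrt5 := by
      simp only [hX, Fin.sum_univ_four, Quaternion.imI_add, zsi]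
      simp only [Quaternion.imI_smul, smul_eq_mul,
        icoB0_imI, icoB1_imI, icoB2_imI, icoB3_imI]
      unfold τ; push_cast
      linear_combination ((d 3 : K)/8) * sqrt5_sq
    have hj : X.imJ = ((c 2/2 + d 2/4 : ℚ) : K) + ((d 2/4 : ℚ) : K) * sqrt5 := by
      simp only [hX, Fin.sum_univ_four, Quaternion.imJ_add, zsj]
      simp only [Quaternion.imJ_smul, smul_eq_mul,
        icoB0_imJ, icoB1_imJ, icoB2_imJ, icoB3_imJ]
      unfold τ; push_cast; ring
    have hk : X.imK = ((c 2/2 + c 3/2 + d 2/4 + d 3/4 : ℚ) : K)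
        + ((d 2/4 + d 3/4 : ℚ) : K) * sqrt5 := by
      simp only [hX, Fin.sum_univ_four, Quaternion.imK_add, zsk]
      simp only [Quaternion.imK_smul, smul_eq_mul,
        icoB0_imK, icoB1_imK, icoB2_imK, icoB3_imK]
      unfold τ; push_cast; ring
    -- fixed point equations
    have h1 : conjK X.re = X.re := congrArg QuaternionAlgebra.re hfix
    have h2 : conjK X.imI = X.imI := congrArg QuaternionAlgebra.imI hfix
    have h3 : conjK X.imK = X.imJ := congrArg QuaternionAlgebra.imJ hfix
    rw [hre, map_add, map_mul, conjK_rat, conjK_rat, conjK_sqrt5] at h1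
    rw [hi, map_add, map_mul, conjK_rat, conjK_rat, conjK_sqrt5] at h2
    rw [hk, map_add, map_mul, conjK_rat, conjK_rat, conjK_sqrt5, hj] at h3
    have key : ∀ b : ℚ, (b : K) * sqrt5 = 0 → b = 0 := by
      intro b hb
      rcases mul_eq_zero.1 hb with h | h
      · exact_mod_cast h
      · exact absurd h sqrt5_ne_zero
    have e1 : (-c 3/4 + d 0/2 + d 2/4 : ℚ) = 0 := by
      refine key _ ?_
      push_cast at h1 ⊢
      linear_combination -h1/2
    have e2 : (c 3/4 + d 1/2 + d 2/4 + d 3/4 : ℚ) = 0 := by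
      refine key _ ?_
      push_cast at h2 ⊢
      linear_combination -h2/2
    have e34 := eqK2 ((c 2/2 + c 3/2 + d 2/4 + d 3/4) - (c 2/2 + d 2/4))
        (-(d 2/4 + d 3/4) - d 2/4) (by push_cast at h3 ⊢; linear_combination h3)
    -- integer relations
    have E1 : -(c 3) + 2 * d 0 + d 2 = 0 := by
      have : ((-(c 3) + 2 * d 0 + d 2 : ℤ) : ℚ) = 0 := by push_cast; linarith
      exact_mod_cast this
    have E2 : c 3 + 2 * d 1 + d 2 + d 3 = 0 := by
      have : ((c 3 + 2 * d 1 + d 2 + d 3 : ℤ) : ℚ) = 0 := by push_cast; linarith [e2]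
      exact_mod_cast this
    have E3 : 2 * c 3 + d 3 = 0 := by
      have h' := e34.1
      have : ((2 * c 3 + d 3 : ℤ) : ℚ) = 0 := by push_cast; linarith
      exact_mod_cast this
    have E4 : 2 * d 2 + d 3 = 0 := by
      have h' := e34.2
      have : ((2 * d 2 + d 3 : ℤ) : ℚ) = 0 := by push_cast; linarith
      exact_mod_cast this
    have hd0 : d 0 = 0 := by omega
    have hd1 : d 1 = 0 := by omega
    have hc3 : c 3 = d 2 := by omega
    have hd3 : d 3 = -(2 * d 2) := by omega
    rw [hd0, hc3, hd3] at hre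
    rw [hd1, hc3, hd3] at hi
    rw [hc3, hd3] at hk
    have hXval : X = (c 0 + c 2 + 2 * d 2) • lB 0 + (c 2 + d 2) • lB 1
        + (2 * d 2 - c 1) • lB 2 + (d 2) • lB 3 := by
      apply Quaternion.ext
      · rw [hre]
        simp only [Quaternion.re_add, zsre, lB0_re, lB1_re, lB2_re, lB3_re]
        push_cast; ring
      · rw [hi]
        simp only [Quaternion.imI_add, zsi, lB0_imI, lB1_imI, lB2_imI, lB3_imI]
        push_cast; ring
      · rw [hj]
        simp only [Quaternion.imJ_add, zsj, lB0_imJ, lB1_imJ, lB2_imJ, lB3_imJ]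
        unfold τ; push_cast; ring
      · rw [hk]
        simp only [Quaternion.imK_add, zsk, lB0_imK, lB1_imK, lB2_imK, lB3_imK]
        unfold τ; push_cast; ring
    rw [hXval]
    have hmem : ∀ i : Fin 4, lB i ∈ LatA4 := fun i => AddSubgroup.subset_closure ⟨i, rfl⟩
    exact add_mem (add_mem (add_mem (zsmul_mem (hmem 0) _) (zsmul_mem (hmem 1) _))
      (zsmul_mem (hmem 2) _)) (zsmul_mem (hmem 3) _)
  · intro hx
    induction hx using AddSubgroup.closure_induction with
    | mem g hg =>
      obtain ⟨i, rfl⟩ := hg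
      exact ⟨lB_mem_Ico i, twist_lB i⟩
    | zero => exact ⟨zero_mem _, twist_zero⟩
    | add a b _ _ ha hb => exact ⟨add_mem ha.1 hb.1, by rw [twist_add, ha.2, hb.2]⟩
    | neg a _ ha => exact ⟨neg_mem ha.1, by rw [twist_neg, ha.2]⟩
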